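/- Deterministic-availability simplification of the control-arm weighting identification (appendix note): under assumptions (I-0), (C-0), (P-0), (Pool), (P-0-all) and (Det), one has 𝔼[Y⁰ | V=1] = (1/𝒫(V=1)) · 𝔼[ 1{A=0} · 1{V=1} · Y / π₀(W,E) ], where π₀(w,e) := 𝒫(A=0 | W=w, E=e) and the integrand is defined to be 0 outside the event {A=0, V=1}. -/

import Mathlib

open MeasureTheory Finset

/-- Conditional expectation given an event: `𝔼[X | B] := 𝔼[X · 1_B] / 𝒫(B)`. -/
noncomputable def condMean {Ω : Type*} [MeasurableSpace Ω] (P : Measure Ω)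
    (X : Ω → ℝ) (B : Set Ω) : ℝ :=
  (∫ ω, B.indicator X ω ∂P) / (P B).toReal

/-- Deterministic-availability simplification of the control-arm weighting identification
(appendix note): under (I-0), (C-0), (P-0), (Pool), (P-0-all) and (Det),
`𝔼[Y⁰ | V=1] = (1/𝒫(V=1)) · 𝔼[1{A=0} · 1{V=1} · Y / π₀(W,E)]`, where
`π₀(w,e) := 𝒫(A=0 | W=w, E=e)` and the integrand is `0` outside `{A=0, V=1}`. -/
theorem ipw_identification_control_deterministic
    {Ω : Type*} [MeasurableSpace Ω] (P : Measure Ω) [IsProbabilityMeasure P]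
    {𝓦 ℰ : Type*} [Fintype 𝓦] [Fintype ℰ] [Nonempty 𝓦] [Nonempty ℰ]
    [MeasurableSpace 𝓦] [MeasurableSingletonClass 𝓦]
    [MeasurableSpace ℰ] [MeasurableSingletonClass ℰ]
    (W : Ω → 𝓦) (E : Ω → ℰ) (V : Ω → Fin 2) {K : ℕ} (A : Ω → Fin (K + 1))
    (k : Fin (K + 1)) (Y Yk Y0 : Ω → ℝ)
    (hW : Measurable W) (hE : Measurable E) (hV : Measurable V) (hA : Measurable A)
    (hY : Integrable Y P) (hYk : Integrable Yk P) (hY0 : Integrable Y0 P)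
    (hV1 : 0 < P {ω | V ω = 1})
    -- (I-0) weak A-ignorability for arm 0
    (hI0 : ∀ (w : 𝓦) (e : ℰ), 0 < P {ω | A ω = 0 ∧ W ω = w ∧ E ω = e ∧ V ω = 1} →
      condMean P Y0 {ω | W ω = w ∧ E ω = e ∧ V ω = 1} =
        condMean P Y0 {ω | A ω = 0 ∧ W ω = w ∧ E ω = e ∧ V ω = 1})
    -- (C-0) consistency in mean for arm 0
    (hC0 : ∀ (w : 𝓦) (e : ℰ), 0 < P {ω | A ω = 0 ∧ W ω = w ∧ E ω = e ∧ V ω = 1} →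
      condMean P Y0 {ω | A ω = 0 ∧ W ω = w ∧ E ω = e ∧ V ω = 1} =
        condMean P Y {ω | A ω = 0 ∧ W ω = w ∧ E ω = e ∧ V ω = 1})
    -- (P-0) positivity for arm 0
    (hP0 : ∀ (w : 𝓦) (e : ℰ), 0 < P {ω | W ω = w ∧ E ω = e ∧ V ω = 1} →
      0 < P {ω | A ω = 0 ∧ W ω = w ∧ E ω = e ∧ V ω = 1})
    -- (Pool) pooling of concurrent and non-concurrent controls
    (hPool : ∀ (w : 𝓦) (e : ℰ), 0 < P {ω | A ω = 0 ∧ W ω = w ∧ E ω = e ∧ V ω = 1} →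
      condMean P Y {ω | A ω = 0 ∧ W ω = w ∧ E ω = e ∧ V ω = 1} =
        condMean P Y {ω | A ω = 0 ∧ W ω = w ∧ E ω = e})
    -- (P-0-all) positivity of the shared control arm among all units
    (hP0all : ∀ (w : 𝓦) (e : ℰ), 0 < P {ω | W ω = w ∧ E ω = e} →
      0 < P {ω | A ω = 0 ∧ W ω = w ∧ E ω = e})
    -- (Det) availability is a deterministic function of entry time
    (f : ℰ → Fin 2) (hdet : ∀ᵐ ω ∂P, V ω = f (E ω))
    :
    condMean P Y0 {ω | V ω = 1} =
      (1 / (P {ω | V ω = 1}).toReal) *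
        ∫ ω, (if A ω = 0 ∧ V ω = 1 then
            Y ω /
              ((P {ω' | A ω' = 0 ∧ W ω' = W ω ∧ E ω' = E ω}).toReal /
                (P {ω' | W ω' = W ω ∧ E ω' = E ω}).toReal)
          else 0) ∂P := by
    classical
  -- Notation for the relevant sets
  set S1 : 𝓦 → ℰ → Set Ω := fun w e => {ω | W ω = w ∧ E ω = e ∧ V ω = 1} with hS1def
  set Sf : 𝓦 → ℰ → Set Ω := fun w e => {ω | A ω = 0 ∧ W ω = w ∧ E ω = e ∧ V ω = 1} with hSfdef
  set T : 𝓦 → ℰ → Set Ω := fun w e => {ω | A ω = 0 ∧ W ω = w ∧ E ω = e} with hTdef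
  set U : 𝓦 → ℰ → Set Ω := fun w e => {ω | W ω = w ∧ E ω = e} with hUdef
  set c : 𝓦 → ℰ → ℝ := fun w e => (P (T w e)).toReal / (P (U w e)).toReal with hcdef
  have hmW : ∀ w : 𝓦, MeasurableSet {ω | W ω = w} := fun w => hW (measurableSet_singleton w)
  have hmE : ∀ e : ℰ, MeasurableSet {ω | E ω = e} := fun e => hE (measurableSet_singleton e)
  have hmV : MeasurableSet {ω | V ω = 1} := hV (measurableSet_singleton 1)
  have hmA : MeasurableSet {ω | A ω = 0} := hA (measurableSet_singleton 0)
  have hmS1 : ∀ w e, MeasurableSet (S1 w e) := fun w e =>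
    (hmW w).inter ((hmE e).inter hmV)
  have hmSf : ∀ w e, MeasurableSet (Sf w e) := fun w e =>
    hmA.inter ((hmW w).inter ((hmE e).inter hmV))
  have hmT : ∀ w e, MeasurableSet (T w e) := fun w e => hmA.inter ((hmW w).inter (hmE e))
  -- Cell-wise identity
  have key : ∀ w e,
      (∫ ω, (S1 w e).indicator Y0 ω ∂P)
        = ∫ ω, (Sf w e).indicator (fun ω' => Y ω' / c w e) ω ∂P := by
    intro w e
    have hsub : Sf w e ⊆ S1 w e := fun ω h => ⟨h.2.1, h.2.2.1, h.2.2.2⟩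
    by_cases h1 : P (S1 w e) = 0
    · have h2 : P (Sf w e) = 0 := measure_mono_null hsub h1
      rw [integral_indicator (hmS1 w e), integral_indicator (hmSf w e),
        Measure.restrict_eq_zero.mpr h1, Measure.restrict_eq_zero.mpr h2,
        integral_zero_measure, integral_zero_measure]
    · have hp1 : 0 < P (S1 w e) := pos_iff_ne_zero.mpr h1
      have hpf : 0 < P (Sf w e) := hP0 w e hp1
      have hpT : 0 < P (T w e) :=
        lt_of_lt_of_le hpf (measure_mono fun ω h => ⟨h.1, h.2.1, h.2.2.1⟩)
      have hpU : 0 < P (U w e) :=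
        lt_of_lt_of_le hp1 (measure_mono fun ω h => ⟨h.1, h.2.1⟩)
      have hbad : P {ω | ¬ V ω = f (E ω)} = 0 := by
        simpa [ae_iff] using hdet
      -- f e = 1
      have hfe : f e = 1 := by
        have hne : P (S1 w e ∩ {ω | V ω = f (E ω)}) ≠ 0 := by
          rw [measure_inter_conull (by rw [Set.compl_setOf]; exact hbad)]
          exact h1
        obtain ⟨ω0, hω0⟩ := nonempty_of_measure_ne_zero hne
        obtain ⟨⟨hw0, he0, hv0⟩, hg0⟩ := hω0
        rw [← he0, ← hg0, hv0]
      -- a.e. set equality S1 = U and Sf = T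
      have haeS1U : S1 w e =ᵐ[P] U w e := by
        rw [Filter.eventuallyEq_set]
        filter_upwards [hdet] with ω hω
        constructor
        · rintro ⟨hw, he, hv⟩; exact ⟨hw, he⟩
        · rintro ⟨hw, he⟩; exact ⟨hw, he, by rw [hω, he, hfe]⟩
      have hPU : P (S1 w e) = P (U w e) := measure_congr haeS1U
      have haeY : (∫ ω, (Sf w e).indicator Y ω ∂P) = ∫ ω, (T w e).indicator Y ω ∂P := by
        refine integral_congr_ae ?_
        filter_upwards [hdet] with ω hω
        by_cases hT' : ω ∈ T w e
        · have hSf' : ω ∈ Sf w e :=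
            ⟨hT'.1, hT'.2.1, hT'.2.2, by rw [hω, hT'.2.2, hfe]⟩
          rw [Set.indicator_of_mem hSf', Set.indicator_of_mem hT']
        · have hSf' : ω ∉ Sf w e := fun h => hT' ⟨h.1, h.2.1, h.2.2.1⟩
          rw [Set.indicator_of_notMem hSf', Set.indicator_of_notMem hT']
      -- real-number positivity
      have hrS1 : (0:ℝ) < (P (S1 w e)).toReal :=
        ENNReal.toReal_pos hp1.ne' (measure_ne_top P _)
      have hrT : (0:ℝ) < (P (T w e)).toReal :=
        ENNReal.toReal_pos hpT.ne' (measure_ne_top P _)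
      have hrU : (0:ℝ) < (P (U w e)).toReal :=
        ENNReal.toReal_pos hpU.ne' (measure_ne_top P _)
      -- condMean chain
      have hc : condMean P Y0 (S1 w e) = condMean P Y (T w e) :=
        (hI0 w e hpf).trans ((hC0 w e hpf).trans (hPool w e hpf))
      have hL : (∫ ω, (S1 w e).indicator Y0 ω ∂P)
          = condMean P Y (T w e) * (P (S1 w e)).toReal := by
        rw [← hc, condMean, div_mul_cancel₀ _ hrS1.ne']
      have hR : (∫ ω, (Sf w e).indicator (fun ω' => Y ω' / c w e) ω ∂P)
          = (∫ ω, (T w e).indicator Y ω ∂P) / c w e := by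
        rw [← haeY]
        rw [show (Sf w e).indicator (fun ω' => Y ω' / c w e)
            = fun ω => ((Sf w e).indicator Y ω) / c w e by
          funext ω
          by_cases h : ω ∈ Sf w e
          · rw [Set.indicator_of_mem h, Set.indicator_of_mem h]
          · rw [Set.indicator_of_notMem h, Set.indicator_of_notMem h, zero_div]]
        exact integral_div _ _
      rw [hL, hR, condMean, hPU, hcdef]
      field_simp
  -- decomposition of the LHS integral
  have hintL : ∀ w e, Integrable ((S1 w e).indicator Y0) P :=
    fun w e => hY0.indicator (hmS1 w e)
  have hintR : ∀ w e, Integrable ((Sf w e).indicator (fun ω' => Y ω' / c w e)) P :=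
    fun w e => (hY.div_const _).indicator (hmSf w e)
  have hsumL : ∀ ω, Set.indicator {ω | V ω = 1} Y0 ω
      = ∑ w : 𝓦, ∑ e : ℰ, (S1 w e).indicator Y0 ω := by
    intro ω
    rw [Finset.sum_eq_single_of_mem (W ω) (Finset.mem_univ _) ?hw,
      Finset.sum_eq_single_of_mem (E ω) (Finset.mem_univ _) ?he]
    · by_cases hv : V ω = 1 <;> simp [Set.indicator_apply, hS1def, hv]
    case he =>
      intro e _ hne
      simp [Set.indicator_apply, hS1def, Ne.symm hne]
    case hw =>
      intro w _ hne
      refine Finset.sum_eq_zero fun e _ => ?_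
      simp [Set.indicator_apply, hS1def, Ne.symm hne]
  have hsumR : ∀ ω, (if A ω = 0 ∧ V ω = 1 then
        Y ω /
          ((P {ω' | A ω' = 0 ∧ W ω' = W ω ∧ E ω' = E ω}).toReal /
            (P {ω' | W ω' = W ω ∧ E ω' = E ω}).toReal)
      else 0)
      = ∑ w : 𝓦, ∑ e : ℰ, (Sf w e).indicator (fun ω' => Y ω' / c w e) ω := by
    intro ω
    rw [Finset.sum_eq_single_of_mem (W ω) (Finset.mem_univ _) ?hw,
      Finset.sum_eq_single_of_mem (E ω) (Finset.mem_univ _) ?he]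
    · by_cases hv : A ω = 0 ∧ V ω = 1 <;>
        simp [Set.indicator_apply, hSfdef, hcdef, hTdef, hUdef, hv, and_assoc]
    case he =>
      intro e _ hne
      simp [Set.indicator_apply, hSfdef, Ne.symm hne]
    case hw =>
      intro w _ hne
      refine Finset.sum_eq_zero fun e _ => ?_
      simp [Set.indicator_apply, hSfdef, Ne.symm hne]
  have hLR : (∫ ω, Set.indicator {ω | V ω = 1} Y0 ω ∂P)
      = ∫ ω, (if A ω = 0 ∧ V ω = 1 then
          Y ω /
            ((P {ω' | A ω' = 0 ∧ W ω' = W ω ∧ E ω' = E ω}).toReal /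
              (P {ω' | W ω' = W ω ∧ E ω' = E ω}).toReal)
        else 0) ∂P := by
    calc (∫ ω, Set.indicator {ω | V ω = 1} Y0 ω ∂P)
        = ∫ ω, ∑ w : 𝓦, ∑ e : ℰ, (S1 w e).indicator Y0 ω ∂P := by
          exact integral_congr_ae (Filter.Eventually.of_forall hsumL)
      _ = ∑ w : 𝓦, ∑ e : ℰ, ∫ ω, (S1 w e).indicator Y0 ω ∂P := by
          rw [integral_finset_sum _ fun w _ => integrable_finset_sum _ fun e _ => hintL w e]
          exact Finset.sum_congr rfl fun w _ => integral_finset_sum _ fun e _ => hintL w e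
      _ = ∑ w : 𝓦, ∑ e : ℰ, ∫ ω, (Sf w e).indicator (fun ω' => Y ω' / c w e) ω ∂P :=
          Finset.sum_congr rfl fun w _ => Finset.sum_congr rfl fun e _ => key w e
      _ = ∫ ω, ∑ w : 𝓦, ∑ e : ℰ, (Sf w e).indicator (fun ω' => Y ω' / c w e) ω ∂P := by
          rw [integral_finset_sum _ fun w _ => integrable_finset_sum _ fun e _ => hintR w e]
          exact (Finset.sum_congr rfl fun w _ =>
            (integral_finset_sum _ fun e _ => hintR w e).symm)
      _ = _ := (integral_congr_ae (Filter.Eventually.of_forall hsumR)).symm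
  rw [condMean, hLR, one_div, inv_mul_eq_div]
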